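/- arXiv:2010.11740 — 9 statements merged into one kernel-verified Lean document; each statement's English description precedes it below -/
import Mathlib

section
/- For every σ > 0 and every e ∈ ℝ, and for every s > 0, one has (e²/2)·s + σ²·(s·log s − s + 1) ≥ σ²·(1 − exp(−e²/(2σ²))), with equality if and only if s = exp(−e²/(2σ²)). In particular, for fixed e the augmented half-quadratic cost in s is minimized exactly at s = G_σ(e). -/
/-- Gaussian kernel `G_σ(e) = exp(−e²/(2σ²))`. -/
noncomputable def gaussKernel (σ e : ℝ) : ℝ := Real.exp (-(e ^ 2) / (2 * σ ^ 2))

/-- Half-quadratic potential `φ_σ(s) = σ²·(s·log s − s + 1)`. -/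
noncomputable def hqPotential (σ s : ℝ) : ℝ := σ ^ 2 * (s * Real.log s - s + 1)

/-- For every `σ > 0`, `e ∈ ℝ` and `s > 0`,
`(e²/2)·s + σ²·(s·log s − s + 1) ≥ σ²·(1 − exp(−e²/(2σ²)))`,
with equality iff `s = exp(−e²/(2σ²))`. -/
theorem hq_pointwise_lower_bound (σ e s : ℝ) (hσ : 0 < σ) (hs : 0 < s) :
    σ ^ 2 * (1 - gaussKernel σ e) ≤ (e ^ 2 / 2) * s + hqPotential σ s ∧
    ((e ^ 2 / 2) * s + hqPotential σ s = σ ^ 2 * (1 - gaussKernel σ e) ↔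
      s = gaussKernel σ e) := by
  set t : ℝ := -(e ^ 2) / (2 * σ ^ 2) with ht
  have hσ2 : (0:ℝ) < σ ^ 2 := by positivity
  have hg : gaussKernel σ e = Real.exp t := rfl
  have hgpos : 0 < Real.exp t := Real.exp_pos t
  have he2 : e ^ 2 / 2 = -t * σ ^ 2 := by
    rw [ht]; field_simp
  have hlog : Real.log (Real.exp t / s) = t - Real.log s := by
    rw [Real.log_div (ne_of_gt hgpos) (ne_of_gt hs), Real.log_exp]
  have hdiff : (e ^ 2 / 2) * s + hqPotential σ s - σ ^ 2 * (1 - gaussKernel σ e)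
      = σ ^ 2 * (s * Real.log s - t * s - s + Real.exp t) := by
    rw [hg, hqPotential, he2]; ring
  have hineq : 0 ≤ s * Real.log s - t * s - s + Real.exp t := by
    have key : Real.log (Real.exp t / s) ≤ Real.exp t / s - 1 :=
      Real.log_le_sub_one_of_pos (by positivity)
    rw [hlog] at key
    have h2 := mul_le_mul_of_nonneg_left key hs.le
    have h3 : s * (Real.exp t / s - 1) = Real.exp t - s := by
      field_simp
    nlinarith
  refine ⟨by nlinarith, ?_, ?_⟩
  · intro heq
    rw [hg]
    by_contra hne
    have hne' : Real.exp t / s ≠ 1 := by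
      intro h
      exact hne ((div_eq_one_iff_eq (ne_of_gt hs)).mp h).symm
    have key : Real.log (Real.exp t / s) < Real.exp t / s - 1 :=
      Real.log_lt_sub_one_of_pos (by positivity) hne'
    rw [hlog] at key
    have h2 := mul_lt_mul_of_pos_left key hs
    have h3 : s * (Real.exp t / s - 1) = Real.exp t - s := by
      field_simp
    nlinarith
  · intro heq
    rw [heq, hg, hqPotential, he2, Real.log_exp]; ring
end

section
/- For every σ > 0 and every e ∈ ℝ, the infimum over s ∈ (0, ∞) of (e²/2)·s + σ²·(s·log s − s + 1) equals σ²·(1 − exp(−e²/(2σ²))), i.e., the Welsch loss admits the half-quadratic representation σ²(1 − G_σ(e)) = min_{s>0} ((e²/2)·s + φ_σ(s)). -/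
lemma mul_log_sub_log_ge (x y : ℝ) (hx : 0 < x) (hy : 0 < y) :
    x - y ≤ x * (Real.log x - Real.log y) := by
  have h := Real.log_le_sub_one_of_pos (show 0 < y / x by positivity)
  rw [Real.log_div (ne_of_gt hy) (ne_of_gt hx)] at h
  have h2 := mul_le_mul_of_nonneg_left h (le_of_lt hx)
  have hx' : x ≠ 0 := ne_of_gt hx
  nlinarith [mul_div_cancel₀ y hx']

/-- Half-quadratic representation of the Welsch loss:
`σ²(1 − G_σ(e)) = inf_{s > 0} ((e²/2)·s + φ_σ(s))`. -/
theorem hq_representation (σ e : ℝ) (hσ : 0 < σ) :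
    sInf ((fun s : ℝ => (e ^ 2 / 2) * s + hqPotential σ s) '' Set.Ioi (0 : ℝ)) =
      σ ^ 2 * (1 - gaussKernel σ e) := by
  have hσ2 : (0:ℝ) < σ ^ 2 := by positivity
  set t : ℝ := e ^ 2 / (2 * σ ^ 2) with ht
  set s₀ : ℝ := Real.exp (-t) with hs₀
  have hs₀pos : 0 < s₀ := Real.exp_pos _
  have hlog : Real.log s₀ = -t := Real.log_exp _
  have ha : e ^ 2 / 2 = t * σ ^ 2 := by rw [ht, div_mul_eq_mul_div, mul_comm 2, ← div_div, mul_div_assoc, div_self hσ2.ne', mul_one]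
  have hG : gaussKernel σ e = s₀ := by
    simp only [gaussKernel, hs₀, ht]
    ring_nf
  have hval : (e ^ 2 / 2) * s₀ + hqPotential σ s₀ = σ ^ 2 * (1 - gaussKernel σ e) := by
    rw [hG, hqPotential, hlog, ha]; ring
  have hleast : IsLeast ((fun s : ℝ => (e ^ 2 / 2) * s + hqPotential σ s) '' Set.Ioi (0 : ℝ))
      (σ ^ 2 * (1 - gaussKernel σ e)) := by
    constructor
    · exact ⟨s₀, hs₀pos, hval⟩
    · rintro y ⟨s, hs, rfl⟩
      have hspos : (0:ℝ) < s := hs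
      have key := mul_log_sub_log_ge s s₀ hspos hs₀pos
      rw [hlog] at key
      simp only [hqPotential, hG, ha]
      nlinarith [mul_le_mul_of_nonneg_left key (le_of_lt hσ2)]
  exact hleast.csInf_eq
end

section
/- Let ι be a finite type, σ > 0, and e : ι → ℝ. For every weight vector s : ι → ℝ with s i > 0 for all i, one has Σᵢ [ (e i)²·(s i)/2 + σ²·((s i)·log(s i) − s i + 1) ] ≥ Σᵢ σ²·(1 − exp(−(e i)²/(2σ²))), with equality if and only if s i = exp(−(e i)²/(2σ²)) for every i. Hence, for fixed residuals, the half-quadratic augmented cost over the weight tensor is minimized exactly at the Gaussian-kernel weights W_i = G_σ(e i). -/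
open Finset

lemma gaussKernel_pos (σ e : ℝ) : 0 < gaussKernel σ e := Real.exp_pos _

lemma log_gaussKernel (σ e : ℝ) : Real.log (gaussKernel σ e) = -(e ^ 2) / (2 * σ ^ 2) :=
  Real.log_exp _

/-- Pointwise bound. -/
lemma pt_le (σ : ℝ) (hσ : 0 < σ) (e s : ℝ) (hs : 0 < s) :
    σ ^ 2 * (1 - gaussKernel σ e) ≤ e ^ 2 * s / 2 + σ ^ 2 * (s * Real.log s - s + 1) := by
  set g := gaussKernel σ e with hg
  have hgpos : 0 < g := gaussKernel_pos σ e
  have hlog := Real.log_le_sub_one_of_pos (div_pos hgpos hs)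
  rw [Real.log_div (ne_of_gt hgpos) (ne_of_gt hs)] at hlog
  have key : s * (Real.log g - Real.log s) ≤ g - s := by
    have := mul_le_mul_of_nonneg_left hlog (le_of_lt hs)
    calc s * (Real.log g - Real.log s) ≤ s * (g / s - 1) := this
      _ = g - s := by field_simp
  have hlogg : Real.log g = -(e ^ 2) / (2 * σ ^ 2) := log_gaussKernel σ e
  have hσ2 : (0:ℝ) < σ ^ 2 := by positivity
  have h1 := mul_le_mul_of_nonneg_left key hσ2.le
  have h2 : σ ^ 2 * (s * (Real.log g - Real.log s)) =
      s * (-(e ^ 2) / 2) - σ ^ 2 * (s * Real.log s) := by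
    rw [hlogg]; field_simp
  linarith [h1, h2]

lemma pt_lt (σ : ℝ) (hσ : 0 < σ) (e s : ℝ) (hs : 0 < s) (hne : s ≠ gaussKernel σ e) :
    σ ^ 2 * (1 - gaussKernel σ e) < e ^ 2 * s / 2 + σ ^ 2 * (s * Real.log s - s + 1) := by
  set g := gaussKernel σ e with hg
  have hgpos : 0 < g := gaussKernel_pos σ e
  have hne1 : g / s ≠ 1 := by
    intro h
    exact hne (by field_simp at h; linarith)
  have hlog := Real.log_lt_sub_one_of_pos (div_pos hgpos hs) hne1
  rw [Real.log_div (ne_of_gt hgpos) (ne_of_gt hs)] at hlog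
  have key : s * (Real.log g - Real.log s) < g - s := by
    have := mul_lt_mul_of_pos_left hlog hs
    calc s * (Real.log g - Real.log s) < s * (g / s - 1) := this
      _ = g - s := by field_simp
  have hlogg : Real.log g = -(e ^ 2) / (2 * σ ^ 2) := log_gaussKernel σ e
  have hσ2 : (0:ℝ) < σ ^ 2 := by positivity
  have h1 := mul_lt_mul_of_pos_left key hσ2
  have h2 : σ ^ 2 * (s * (Real.log g - Real.log s)) =
      s * (-(e ^ 2) / 2) - σ ^ 2 * (s * Real.log s) := by
    rw [hlogg]; field_simp
  linarith [h1, h2]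

/-- For fixed residuals `e : ι → ℝ`, the half-quadratic augmented cost over the
weights `s` is bounded below by the summed Welsch loss, with equality iff the
weights are the Gaussian-kernel weights `s i = G_σ(e i)`. -/
theorem hq_weights_optimal {ι : Type*} [Fintype ι] (σ : ℝ) (hσ : 0 < σ)
    (e : ι → ℝ) (s : ι → ℝ) (hs : ∀ i, 0 < s i) :
    (∑ i, σ ^ 2 * (1 - gaussKernel σ (e i))) ≤
      ∑ i, ((e i) ^ 2 * (s i) / 2 + σ ^ 2 * ((s i) * Real.log (s i) - s i + 1)) ∧
    ((∑ i, ((e i) ^ 2 * (s i) / 2 + σ ^ 2 * ((s i) * Real.log (s i) - s i + 1)) =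
        ∑ i, σ ^ 2 * (1 - gaussKernel σ (e i))) ↔
      ∀ i, s i = gaussKernel σ (e i)) := by
  have hle : ∀ i ∈ Finset.univ (α := ι), σ ^ 2 * (1 - gaussKernel σ (e i)) ≤
      (e i) ^ 2 * (s i) / 2 + σ ^ 2 * ((s i) * Real.log (s i) - s i + 1) :=
    fun i _ => pt_le σ hσ (e i) (s i) (hs i)
  refine ⟨Finset.sum_le_sum hle, ?_, ?_⟩
  · intro heq i
    by_contra hne
    have hlt : ∑ j, σ ^ 2 * (1 - gaussKernel σ (e j)) <
        ∑ j, ((e j) ^ 2 * (s j) / 2 + σ ^ 2 * ((s j) * Real.log (s j) - s j + 1)) :=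
      Finset.sum_lt_sum hle ⟨i, Finset.mem_univ i, pt_lt σ hσ (e i) (s i) (hs i) hne⟩
    linarith
  · intro h
    apply Finset.sum_congr rfl
    intro i _
    rw [h i, log_gaussKernel]
    unfold gaussKernel
    have hσ2 : (σ:ℝ) ^ 2 ≠ 0 := by positivity
    field_simp
    ring
end

section
/- Let α be a nonempty type, ι a finite type, σ > 0, and e : α → ι → ℝ a family of residual maps. Then the infimum over x ∈ α of Σᵢ σ²·(1 − exp(−(e x i)²/(2σ²))) equals the infimum over all pairs (x, s) with x ∈ α and s : ι → ℝ satisfying s i > 0 for all i, of Σᵢ [ (e x i)²·(s i)/2 + σ²·((s i)·log(s i) − s i + 1) ]. That is, minimizing the correntropy-based cost is equivalent to minimizing the half-quadratic augmented cost over the enlarged parameter space. -/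
open Finset

lemma hq_aux (s t : ℝ) (hs : 0 < s) (ht : 0 < t) :
    s * Real.log t ≤ s * Real.log s - s + t := by
  have h := Real.add_one_le_exp (Real.log (t / s))
  rw [Real.exp_log (div_pos ht hs), Real.log_div ht.ne' hs.ne'] at h
  have h' := (le_div_iff₀ hs).mp h
  nlinarith

lemma hq_key (σ er s : ℝ) (hσ : 0 < σ) (hs : 0 < s) :
    σ ^ 2 * (1 - gaussKernel σ er) ≤
      er ^ 2 * s / 2 + σ ^ 2 * (s * Real.log s - s + 1) := by
  have hσ2 : (0:ℝ) < σ ^ 2 := by positivity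
  have hGpos : 0 < gaussKernel σ er := Real.exp_pos _
  have hlog : Real.log (gaussKernel σ er) = -(er ^ 2) / (2 * σ ^ 2) :=
    Real.log_exp _
  have h := hq_aux s (gaussKernel σ er) hs hGpos
  have h2 : σ ^ 2 * Real.log (gaussKernel σ er) = -(er ^ 2) / 2 := by
    rw [hlog]; field_simp
  nlinarith [mul_le_mul_of_nonneg_left h hσ2.le]

lemma hq_eq (σ er : ℝ) (hσ : 0 < σ) :
    er ^ 2 * gaussKernel σ er / 2 +
      σ ^ 2 * (gaussKernel σ er * Real.log (gaussKernel σ er)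
        - gaussKernel σ er + 1) = σ ^ 2 * (1 - gaussKernel σ er) := by
  have hlog : Real.log (gaussKernel σ er) = -(er ^ 2) / (2 * σ ^ 2) :=
    Real.log_exp _
  have hσ2 : (σ:ℝ) ^ 2 ≠ 0 := by positivity
  rw [hlog]; field_simp; ring

lemma hq_nonneg (σ er : ℝ) : 0 ≤ σ ^ 2 * (1 - gaussKernel σ er) := by
  have h : gaussKernel σ er ≤ 1 := by
    unfold gaussKernel
    rw [Real.exp_le_one_iff]
    have h1 : 0 ≤ er ^ 2 := sq_nonneg _
    have h2 : 0 ≤ 2 * σ ^ 2 := by positivity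
    exact div_nonpos_of_nonpos_of_nonneg (by linarith) h2
  nlinarith [sq_nonneg σ]

/-- Minimizing the correntropy-based cost is equivalent to minimizing the
half-quadratic augmented cost over the enlarged parameter space `(x, s)`. -/
theorem hq_inf_equivalence {α : Type*} [Nonempty α] {ι : Type*} [Fintype ι]
    (σ : ℝ) (hσ : 0 < σ) (e : α → ι → ℝ) :
    sInf (Set.range fun x : α => ∑ i, σ ^ 2 * (1 - gaussKernel σ (e x i))) =
      sInf {v : ℝ | ∃ (x : α) (s : ι → ℝ), (∀ i, 0 < s i) ∧
        v = ∑ i, ((e x i) ^ 2 * (s i) / 2 +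
          σ ^ 2 * ((s i) * Real.log (s i) - s i + 1))} := by
  obtain ⟨x₀⟩ := ‹Nonempty α›
  have hbddL : BddBelow (Set.range fun x : α =>
      ∑ i, σ ^ 2 * (1 - gaussKernel σ (e x i))) := by
    refine ⟨0, ?_⟩
    rintro v ⟨x, rfl⟩
    exact Finset.sum_nonneg fun i _ => hq_nonneg σ (e x i)
  have hkey : ∀ (x : α) (s : ι → ℝ), (∀ i, 0 < s i) →
      (∑ i, σ ^ 2 * (1 - gaussKernel σ (e x i))) ≤
        ∑ i, ((e x i) ^ 2 * (s i) / 2 +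
          σ ^ 2 * ((s i) * Real.log (s i) - s i + 1)) := fun x s hs =>
    Finset.sum_le_sum fun i _ => hq_key σ (e x i) (s i) hσ (hs i)
  have hmem : ∀ x : α, (∑ i, σ ^ 2 * (1 - gaussKernel σ (e x i))) ∈
      {v : ℝ | ∃ (x : α) (s : ι → ℝ), (∀ i, 0 < s i) ∧
        v = ∑ i, ((e x i) ^ 2 * (s i) / 2 +
          σ ^ 2 * ((s i) * Real.log (s i) - s i + 1))} := by
    intro x
    refine ⟨x, fun i => gaussKernel σ (e x i), fun i => Real.exp_pos _, ?_⟩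
    exact (Finset.sum_congr rfl fun i _ => (hq_eq σ (e x i) hσ).symm)
  have hbddR : BddBelow {v : ℝ | ∃ (x : α) (s : ι → ℝ), (∀ i, 0 < s i) ∧
      v = ∑ i, ((e x i) ^ 2 * (s i) / 2 +
        σ ^ 2 * ((s i) * Real.log (s i) - s i + 1))} := by
    refine ⟨0, ?_⟩
    rintro v ⟨x, s, hs, rfl⟩
    exact le_trans (Finset.sum_nonneg fun i _ => hq_nonneg σ (e x i))
      (hkey x s hs)
  apply le_antisymm
  · refine le_csInf ⟨_, hmem x₀⟩ ?_
    rintro v ⟨x, s, hs, rfl⟩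
    exact le_trans (csInf_le hbddL ⟨x, rfl⟩) (hkey x s hs)
  · refine le_csInf ⟨_, ⟨x₀, rfl⟩⟩ ?_
    rintro v ⟨x, rfl⟩
    exact csInf_le hbddR (hmem x)
end

section
/- Let Y : Matrix (Fin r) (Fin n) ℂ be such that Y ⬝ Yᴴ is invertible, and let Z : Matrix (Fin m) (Fin n) ℂ. Then for every X : Matrix (Fin m) (Fin r) ℂ, ‖(Z ⬝ Yᴴ ⬝ (Y ⬝ Yᴴ)⁻¹) ⬝ Y − Z‖_F ≤ ‖X ⬝ Y − Z‖_F. That is, the least-squares update X⁺ = Z Yᴴ (Y Yᴴ)⁻¹ does not increase the factorization residual. -/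
open Finset Matrix

/-- Frobenius norm of a complex matrix. -/
noncomputable def frobNorm {m n : Type*} [Fintype m] [Fintype n]
    (A : Matrix m n ℂ) : ℝ :=
  Real.sqrt (∑ i, ∑ j, ‖A i j‖ ^ 2)

noncomputable def fsq {m n : Type*} [Fintype m] [Fintype n]
    (A : Matrix m n ℂ) : ℝ := ∑ i, ∑ j, Complex.normSq (A i j)

lemma fsq_nonneg {m n : Type*} [Fintype m] [Fintype n] (A : Matrix m n ℂ) :
    0 ≤ fsq A :=
  Finset.sum_nonneg fun _ _ => Finset.sum_nonneg fun _ _ => Complex.normSq_nonneg _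

lemma frobNorm_eq {m n : Type*} [Fintype m] [Fintype n] (A : Matrix m n ℂ) :
    Real.sqrt (∑ i, ∑ j, ‖A i j‖ ^ 2) = Real.sqrt (fsq A) := by
  simp [fsq, Complex.sq_norm]

lemma fsq_add_of_orth {m n : Type*} [Fintype m] [Fintype n]
    (A B : Matrix m n ℂ) (h : (Aᴴ * B).trace = 0) :
    fsq (A + B) = fsq A + fsq B := by
  have h2 : (A * Bᴴ).trace = 0 := by
    rw [Matrix.trace_mul_comm]
    have h3 : ((Aᴴ * B)ᴴ).trace = 0 := by
      rw [Matrix.trace_conjTranspose, h]; simp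
    simpa [Matrix.conjTranspose_mul] using h3
  have hre : ∑ i, ∑ j, (A i j * (starRingEnd ℂ) (B i j)).re = 0 := by
    have : (∑ i, ∑ j, A i j * (starRingEnd ℂ) (B i j)) = 0 := by
      simpa [Matrix.trace, Matrix.mul_apply, Matrix.diag, Matrix.conjTranspose_apply]
        using h2
    calc ∑ i, ∑ j, (A i j * (starRingEnd ℂ) (B i j)).re
        = (∑ i, ∑ j, A i j * (starRingEnd ℂ) (B i j)).re := by
          simp [Complex.re_sum]
      _ = 0 := by rw [this]; simp
  simp only [fsq, Matrix.add_apply, Complex.normSq_add, Finset.sum_add_distrib]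
  have : ∑ i, ∑ j, 2 * (A i j * (starRingEnd ℂ) (B i j)).re = 0 := by
    simp only [← Finset.mul_sum]
    rw [hre]; ring
  rw [this]; ring

/-- The least-squares update `X⁺ = Z Yᴴ (Y Yᴴ)⁻¹` does not increase the
factorization residual. -/
theorem ls_update_X {m r n : ℕ} (Y : Matrix (Fin r) (Fin n) ℂ)
    (hY : IsUnit (Y * Yᴴ)) (Z : Matrix (Fin m) (Fin n) ℂ) :
    ∀ X : Matrix (Fin m) (Fin r) ℂ,
      frobNorm ((Z * Yᴴ * (Y * Yᴴ)⁻¹) * Y - Z) ≤ frobNorm (X * Y - Z) := by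
  intro X
  have hdet : IsUnit (Y * Yᴴ).det := (Matrix.isUnit_iff_isUnit_det _).mp hY
  have hright : (Y * Yᴴ) * (Y * Yᴴ)⁻¹ = 1 := Matrix.mul_nonsing_inv _ hdet
  have hherm : ((Y * Yᴴ)⁻¹)ᴴ = (Y * Yᴴ)⁻¹ := by
    rw [Matrix.conjTranspose_nonsing_inv]
    congr 1
    simp [Matrix.conjTranspose_mul]
  set A : Matrix (Fin m) (Fin n) ℂ := (Z * Yᴴ * (Y * Yᴴ)⁻¹) * Y - Z with hA
  set B : Matrix (Fin m) (Fin n) ℂ := X * Y - (Z * Yᴴ * (Y * Yᴴ)⁻¹) * Y with hB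
  have hAB : A + B = X * Y - Z := by rw [hA, hB]; abel
  have hAH : Aᴴ = Yᴴ * ((Y * Yᴴ)⁻¹ * (Y * Zᴴ)) - Zᴴ := by
    rw [hA]
    simp [Matrix.conjTranspose_sub, Matrix.conjTranspose_mul, hherm, Matrix.mul_assoc]
  have hYA : Y * Aᴴ = 0 := by
    rw [hAH, Matrix.mul_sub, ← Matrix.mul_assoc, ← Matrix.mul_assoc, hright]
    simp [Matrix.mul_assoc]
  have hBA : B * Aᴴ = 0 := by
    have hBfac : B = (X - Z * Yᴴ * (Y * Yᴴ)⁻¹) * Y := by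
      rw [hB, Matrix.sub_mul]
    rw [hBfac, Matrix.mul_assoc, hYA, Matrix.mul_zero]
  have horth : (Aᴴ * B).trace = 0 := by
    rw [Matrix.trace_mul_comm, hBA, Matrix.trace_zero]
  have hsum : fsq (X * Y - Z) = fsq A + fsq B := by
    rw [← hAB]; exact fsq_add_of_orth A B horth
  unfold frobNorm
  rw [frobNorm_eq, frobNorm_eq, hsum]
  exact Real.sqrt_le_sqrt (by linarith [fsq_nonneg B])
end

section
/- Let n₁, n₂ ≥ 1 and n₃ ≥ 1, F : Matrix (ZMod n₃) (ZMod n₃) ℂ the DFT matrix F k l = exp(−2πi·(k.val·l.val)/n₃), and set F̃ = F ⊗ I_{n₁}. For any g : Matrix (ZMod n₃ × Fin n₁) (ZMod n₃ × Fin n₂) ℂ, let h = F̃ ⬝ g, let bdiagz(h) be the matrix with bdiagz(h) (k,i) (l,j) = if k = l then h (k,i) (l,j) else 0, and let g' = (1/n₃) • F̃ᴴ ⬝ bdiagz(h). Then the Frobenius inner product satisfies ⟨g, g'⟩_F = ‖g'‖_F², and both quantities equal (1/n₃)·‖bdiagz(F̃ ⬝ g)‖_F². -/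
open Finset Matrix Kronecker

/-- Squared Frobenius norm of a complex matrix. -/
noncomputable def frobSq {m n : Type*} [Fintype m] [Fintype n]
    (A : Matrix m n ℂ) : ℝ :=
  ∑ i, ∑ j, ‖A i j‖ ^ 2

/-- Frobenius inner product of complex matrices. -/
noncomputable def frobInner {m n : Type*} [Fintype m] [Fintype n]
    (A B : Matrix m n ℂ) : ℂ :=
  ∑ i, ∑ j, starRingEnd ℂ (A i j) * B i j

lemma zmod_sum_val {n : ℕ} [NeZero n] (f : ℕ → ℂ) :
    ∑ k : ZMod n, f k.val = ∑ i ∈ Finset.range n, f i := by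
  obtain ⟨m, rfl⟩ := Nat.exists_eq_succ_of_ne_zero (NeZero.ne n)
  exact Fin.sum_univ_eq_sum_range f (m+1)

lemma dft_orth {n₃ : ℕ} [NeZero n₃]
    (F : Matrix (ZMod n₃) (ZMod n₃) ℂ)
    (hF : ∀ k l, F k l = Complex.exp (-(2 * (Real.pi : ℂ) * Complex.I *
      ((k.val : ℂ) * (l.val : ℂ))) / (n₃ : ℂ)))
    (l l' : ZMod n₃) :
    ∑ k : ZMod n₃, starRingEnd ℂ (F k l) * F k l' =
      if l = l' then (n₃ : ℂ) else 0 := by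
  have hn : (n₃ : ℂ) ≠ 0 := Nat.cast_ne_zero.mpr (NeZero.ne n₃)
  have h2 : (2 * (Real.pi : ℂ) * Complex.I) ≠ 0 := by
    simp [Real.pi_ne_zero, Complex.I_ne_zero, Complex.ofReal_ne_zero]
  set D : ℂ := 2 * (Real.pi : ℂ) * Complex.I *
      ((l.val : ℂ) - (l'.val : ℂ)) / (n₃ : ℂ) with hD
  have key : ∀ k : ZMod n₃, starRingEnd ℂ (F k l) * F k l' =
      Complex.exp D ^ k.val := by
    intro k
    rw [hF, hF, ← Complex.exp_conj, ← Complex.exp_add, ← Complex.exp_nat_mul]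
    congr 1
    simp only [map_div₀, map_neg, _root_.map_mul, Complex.conj_I, Complex.conj_ofReal,
      Complex.conj_natCast, map_ofNat]
    rw [← add_div, hD, ← mul_div_assoc]
    congr 1
    ring
  rw [Finset.sum_congr rfl (fun k _ => key k)]
  rw [zmod_sum_val (fun i => Complex.exp D ^ i)]
  by_cases hll : l = l'
  · subst hll
    simp [hD]
  · rw [if_neg hll]
    have hpow : Complex.exp D ^ n₃ = 1 := by
      rw [← Complex.exp_nat_mul]
      have : (n₃ : ℂ) * D = ((l.val : ℤ) - (l'.val : ℤ) : ℤ) * (2 * Real.pi * Complex.I) := by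
        rw [hD]; push_cast; field_simp
      rw [this, Complex.exp_int_mul_two_pi_mul_I]
    have hne : Complex.exp D ≠ 1 := by
      intro hc
      rw [Complex.exp_eq_one_iff] at hc
      obtain ⟨m, hm⟩ := hc
      rw [hD, div_eq_iff hn] at hm
      have h4 : ((l.val : ℂ) - (l'.val : ℂ)) = (m : ℂ) * (n₃ : ℂ) := by
        apply mul_left_cancel₀ h2
        linear_combination hm
      have h5 : (l.val : ℤ) - (l'.val : ℤ) = m * n₃ := by
        exact_mod_cast h4
      have h6 : ((l.val : ℤ) - (l'.val : ℤ)) = 0 := by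
        refine Int.eq_zero_of_abs_lt_dvd (Dvd.intro_left m h5.symm) ?_
        have hv1 := ZMod.val_lt l
        have hv2 := ZMod.val_lt l'
        rw [abs_sub_lt_iff]
        constructor <;> omega
      apply hll
      apply ZMod.val_injective
      omega
    rw [geom_sum_eq hne, hpow]
    simp

lemma kron_unitary {n₁ n₃ : ℕ} [NeZero n₃]
    (F : Matrix (ZMod n₃) (ZMod n₃) ℂ)
    (hF : ∀ k l, F k l = Complex.exp (-(2 * (Real.pi : ℂ) * Complex.I *
      ((k.val : ℂ) * (l.val : ℂ))) / (n₃ : ℂ))) :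
    (F ⊗ₖ (1 : Matrix (Fin n₁) (Fin n₁) ℂ))ᴴ * (F ⊗ₖ (1 : Matrix (Fin n₁) (Fin n₁) ℂ))
      = (n₃ : ℂ) • 1 := by
  ext ⟨k, i⟩ ⟨l, j⟩
  simp only [Matrix.mul_apply, Matrix.conjTranspose_apply, Matrix.kroneckerMap_apply,
    Fintype.sum_prod_type, Matrix.one_apply, star_mul', star_one, star_zero,
    mul_ite, mul_zero, mul_one, ite_mul, zero_mul, one_mul,
    Finset.sum_ite_eq, Finset.sum_ite_eq', Finset.mem_univ, if_true,
    Matrix.smul_apply, smul_eq_mul, ← starRingEnd_apply]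
  by_cases hij : j = i
  · simp only [hij, if_true]
    rw [dft_orth F hF k l]
    by_cases hkl : k = l <;> simp [hkl, Prod.ext_iff, hij]
  · simp only [hij, if_false, map_zero, zero_mul, Finset.sum_const_zero]
    rw [if_neg]
    intro h
    exact hij ((Prod.ext_iff.mp h).2.symm)

lemma frobInner_eq_trace {m n : Type*} [Fintype m] [Fintype n]
    (A B : Matrix m n ℂ) : frobInner A B = (Aᴴ * B).trace := by
  unfold frobInner
  rw [Matrix.trace]
  simp only [Matrix.diag_apply, Matrix.mul_apply, Matrix.conjTranspose_apply,
    ← starRingEnd_apply]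
  exact Finset.sum_comm

lemma frobInner_self_eq {m n : Type*} [Fintype m] [Fintype n]
    (A : Matrix m n ℂ) : frobInner A A = (frobSq A : ℂ) := by
  have key : ∀ z : ℂ, starRingEnd ℂ z * z = ((‖z‖ ^ 2 : ℝ) : ℂ) := by
    intro z
    rw [mul_comm, Complex.mul_conj]
    norm_cast
    exact (Complex.sq_norm z).symm
  unfold frobInner frobSq
  simp only [key]
  norm_cast

lemma frobInner_smul_right {m n : Type*} [Fintype m] [Fintype n]
    (c : ℂ) (A B : Matrix m n ℂ) :
    frobInner A (c • B) = c * frobInner A B := by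
  unfold frobInner
  simp only [Matrix.smul_apply, smul_eq_mul, Finset.mul_sum]
  congr 1; ext i; congr 1; ext j; ring

lemma frobInner_smul_left {m n : Type*} [Fintype m] [Fintype n]
    (c : ℂ) (A B : Matrix m n ℂ) :
    frobInner (c • A) B = starRingEnd ℂ c * frobInner A B := by
  unfold frobInner
  simp only [Matrix.smul_apply, smul_eq_mul, _root_.map_mul, Finset.mul_sum]
  congr 1; ext i; congr 1; ext j; ring

/-- Projecting the gradient onto the block-diagonal structure through the DFT:
`⟨g, g'⟩_F = ‖g'‖_F² = (1/n₃)·‖bdiagz(F̃ ⬝ g)‖_F²`. -/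
theorem bdiagz_gradient_inner {n₁ n₂ n₃ : ℕ}
    (hn₁ : 1 ≤ n₁) (hn₂ : 1 ≤ n₂) [NeZero n₃]
    (F : Matrix (ZMod n₃) (ZMod n₃) ℂ)
    (hF : ∀ k l, F k l = Complex.exp (-(2 * (Real.pi : ℂ) * Complex.I *
      ((k.val : ℂ) * (l.val : ℂ))) / (n₃ : ℂ)))
    (g : Matrix (ZMod n₃ × Fin n₁) (ZMod n₃ × Fin n₂) ℂ)
    (h : Matrix (ZMod n₃ × Fin n₁) (ZMod n₃ × Fin n₂) ℂ)
    (hh : h = (F ⊗ₖ (1 : Matrix (Fin n₁) (Fin n₁) ℂ)) * g)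
    (bdiagzh : Matrix (ZMod n₃ × Fin n₁) (ZMod n₃ × Fin n₂) ℂ)
    (hbd : ∀ k i l j, bdiagzh (k, i) (l, j) = if k = l then h (k, i) (l, j) else 0)
    (g' : Matrix (ZMod n₃ × Fin n₁) (ZMod n₃ × Fin n₂) ℂ)
    (hg' : g' = ((1 : ℂ) / (n₃ : ℂ)) •
      ((F ⊗ₖ (1 : Matrix (Fin n₁) (Fin n₁) ℂ))ᴴ * bdiagzh)) :
    frobInner g g' = (frobSq g' : ℂ) ∧
      frobSq g' = (1 / (n₃ : ℝ)) * frobSq bdiagzh := by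
  have hn : (n₃ : ℂ) ≠ 0 := Nat.cast_ne_zero.mpr (NeZero.ne n₃)
  set Ft := F ⊗ₖ (1 : Matrix (Fin n₁) (Fin n₁) ℂ) with hFt
  set B := bdiagzh with hB
  have hAA : Ftᴴ * Ft = (n₃ : ℂ) • 1 := kron_unitary F hF
  have hAAt : Ft * Ftᴴ = (n₃ : ℂ) • 1 := by
    have h1 : ((n₃ : ℂ)⁻¹ • Ftᴴ) * Ft = 1 := by
      rw [Matrix.smul_mul, hAA, smul_smul, inv_mul_cancel₀ hn, one_smul]
    have h2 : Ft * ((n₃ : ℂ)⁻¹ • Ftᴴ) = 1 := mul_eq_one_comm.mp h1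
    calc Ft * Ftᴴ = (n₃ : ℂ) • (Ft * ((n₃ : ℂ)⁻¹ • Ftᴴ)) := by
          rw [Matrix.mul_smul, smul_smul, mul_inv_cancel₀ hn, one_smul]
      _ = (n₃ : ℂ) • 1 := by rw [h2]
  -- ⟨h, B⟩ = ⟨B, B⟩
  have hhB : frobInner h B = frobInner B B := by
    unfold frobInner
    refine Finset.sum_congr rfl fun p _ => Finset.sum_congr rfl fun q _ => ?_
    obtain ⟨k, i⟩ := p
    obtain ⟨l, j⟩ := q
    by_cases hkl : k = l
    · rw [hbd k i l j, if_pos hkl]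
    · rw [hbd k i l j, if_neg hkl, mul_zero, mul_zero]
  -- key trace computations
  have e1 : frobInner g g' = (1 / (n₃ : ℂ)) * frobInner B B := by
    rw [hg', frobInner_smul_right]
    congr 1
    rw [frobInner_eq_trace, ← Matrix.mul_assoc, ← Matrix.conjTranspose_mul,
      ← hh, ← frobInner_eq_trace, hhB]
  have e2 : frobInner g' g' = (1 / (n₃ : ℂ)) * frobInner B B := by
    rw [hg', frobInner_smul_right, frobInner_smul_left]
    have hM : frobInner (Ftᴴ * B) (Ftᴴ * B) = (n₃ : ℂ) * frobInner B B := by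
      rw [frobInner_eq_trace, Matrix.conjTranspose_mul, Matrix.conjTranspose_conjTranspose,
        Matrix.mul_assoc, ← Matrix.mul_assoc Ft, hAAt, Matrix.smul_mul, Matrix.one_mul,
        Matrix.mul_smul, Matrix.trace_smul, ← frobInner_eq_trace]
      simp
    rw [hM]
    have hconj : starRingEnd ℂ ((1 : ℂ) / (n₃ : ℂ)) = (1 : ℂ) / (n₃ : ℂ) := by
      simp [map_div₀]
    rw [hconj]
    field_simp
  have hreal : (frobSq g' : ℂ) = ((1 / (n₃ : ℝ)) * frobSq bdiagzh : ℝ) := by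
    rw [← frobInner_self_eq g', e2, ← hB]
    push_cast
    rw [frobInner_self_eq B]
  constructor
  · rw [e1, ← e2, frobInner_self_eq]
  · exact_mod_cast hreal
end

section
/- Let Q be a real-entried matrix of size m × n (viewed in ℂ), and let M : Matrix (Fin m) (Fin n) ℂ, U : Matrix (Fin m) (Fin r) ℂ, Y : Matrix (Fin r) (Fin n) ℂ. Define the gradient g = −((Q ∘ Q) ∘ (M − U ⬝ Y)) ⬝ Yᴴ, where ∘ is entrywise (Hadamard) multiplication. Let d : Matrix (Fin m) (Fin r) ℂ be any descent direction with ‖Q ∘ (d ⬝ Y)‖_F ≠ 0, set γ = Re⟨g, d⟩_F and μ = γ / ‖Q ∘ (d ⬝ Y)‖_F². Then the exact line-search decrease identity holds: (1/2)‖Q ∘ (M − (U − μ • d) ⬝ Y)‖_F² = (1/2)‖Q ∘ (M − U ⬝ Y)‖_F² − γ² / (2‖Q ∘ (d ⬝ Y)‖_F²). -/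
open Finset Matrix

lemma frobNorm_sq {m n : Type*} [Fintype m] [Fintype n] (A : Matrix m n ℂ) :
    frobNorm A ^ 2 = ∑ i, ∑ j, Complex.normSq (A i j) := by
  rw [frobNorm, Real.sq_sqrt (by positivity)]
  simp [Complex.sq_norm]

/-- Exact line-search decrease identity for the gradient step in `U`. -/
theorem exact_linesearch_U {m n r : ℕ}
    (Q : Matrix (Fin m) (Fin n) ℂ) (hQ : ∀ i j, (Q i j).im = 0)
    (M : Matrix (Fin m) (Fin n) ℂ) (U : Matrix (Fin m) (Fin r) ℂ)
    (Y : Matrix (Fin r) (Fin n) ℂ)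
    (g : Matrix (Fin m) (Fin r) ℂ)
    (hg : g = -(((Q ⊙ Q) ⊙ (M - U * Y)) * Yᴴ))
    (d : Matrix (Fin m) (Fin r) ℂ)
    (hd : frobNorm (Q ⊙ (d * Y)) ≠ 0)
    (γ : ℝ) (hγ : γ = (frobInner g d).re)
    (μ : ℝ) (hμ : μ = γ / frobNorm (Q ⊙ (d * Y)) ^ 2) :
    (1 / 2) * frobNorm (Q ⊙ (M - (U - (μ : ℂ) • d) * Y)) ^ 2 =
      (1 / 2) * frobNorm (Q ⊙ (M - U * Y)) ^ 2 -
        γ ^ 2 / (2 * frobNorm (Q ⊙ (d * Y)) ^ 2) := by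
  set R := Q ⊙ (M - U * Y) with hR
  set S := Q ⊙ (d * Y) with hS
  have hQc : ∀ i j, starRingEnd ℂ (Q i j) = Q i j := fun i j =>
    Complex.conj_eq_iff_im.mpr (hQ i j)
  set a := ∑ i, ∑ j, Complex.normSq (R i j) with ha
  set c := ∑ i, ∑ j, Complex.normSq (S i j) with hc
  have hcS : frobNorm S ^ 2 = c := frobNorm_sq S
  have hcne : c ≠ 0 := fun h => (pow_ne_zero 2 hd) (hcS.trans h)
  -- pointwise expansion of the gradient inner product
  have L : ∀ i k, starRingEnd ℂ (g i k) * d i k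
      = ∑ j, -(Q i j * Q i j * starRingEnd ℂ ((M - U * Y) i j) * Y k j * d i k) := by
    intro i k
    rw [hg]
    simp only [Matrix.neg_apply, Matrix.mul_apply, Matrix.hadamard_apply,
      Matrix.conjTranspose_apply, map_neg, map_sum]
    rw [neg_mul, Finset.sum_mul, ← Finset.sum_neg_distrib]
    refine Finset.sum_congr rfl fun j _ => ?_
    simp only [_root_.map_mul, Complex.star_def, Complex.conj_conj, hQc]
    try ring
  have Rr : ∀ i j, starRingEnd ℂ (R i j) * S i j
      = ∑ k, Q i j * Q i j * starRingEnd ℂ ((M - U * Y) i j) * Y k j * d i k := by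
    intro i j
    simp only [hR, hS, Matrix.hadamard_apply, Matrix.mul_apply, _root_.map_mul, hQc,
      Finset.mul_sum]
    refine Finset.sum_congr rfl fun k _ => ?_
    ring
  have key : frobInner g d = -frobInner R S := by
    rw [frobInner, frobInner, ← Finset.sum_neg_distrib]
    refine Finset.sum_congr rfl fun i _ => ?_
    rw [← Finset.sum_neg_distrib]
    calc ∑ k, starRingEnd ℂ (g i k) * d i k
        = ∑ k, ∑ j, -(Q i j * Q i j * starRingEnd ℂ ((M - U * Y) i j) * Y k j * d i k) :=
          Finset.sum_congr rfl fun k _ => L i k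
      _ = ∑ j, ∑ k, -(Q i j * Q i j * starRingEnd ℂ ((M - U * Y) i j) * Y k j * d i k) :=
          Finset.sum_comm
      _ = ∑ j, -(starRingEnd ℂ (R i j) * S i j) := by
          refine Finset.sum_congr rfl fun j _ => ?_
          rw [Rr i j, ← Finset.sum_neg_distrib]
  have hγ' : γ = -(frobInner R S).re := by rw [hγ, key, Complex.neg_re]
  have hbS : (frobInner R S).re = ∑ i, ∑ j, (starRingEnd ℂ (R i j) * S i j).re := by
    rw [frobInner, Complex.re_sum]
    exact Finset.sum_congr rfl fun i _ => Complex.re_sum _ _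
  have hmat : Q ⊙ (M - (U - (μ:ℂ) • d) * Y) = R + (μ:ℂ) • S := by
    ext i j
    simp only [Matrix.hadamard_apply, Matrix.sub_mul, Matrix.smul_mul,
      Matrix.sub_apply, Matrix.add_apply, Matrix.smul_apply, smul_eq_mul, hR, hS,
      Matrix.mul_apply]
    ring
  have hpt : ∀ z w : ℂ, Complex.normSq (z + (μ:ℂ) * w)
      = Complex.normSq z + 2 * μ * (starRingEnd ℂ z * w).re + μ ^ 2 * Complex.normSq w := by
    intro z w
    simp only [Complex.normSq_apply, Complex.add_re, Complex.add_im, Complex.mul_re,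
      Complex.mul_im, Complex.ofReal_re, Complex.ofReal_im, Complex.conj_re,
      Complex.conj_im]
    ring
  have hexp2 : frobNorm (Q ⊙ (M - (U - (μ:ℂ) • d) * Y)) ^ 2
      = a + 2 * μ * (frobInner R S).re + μ ^ 2 * c := by
    rw [hmat, frobNorm_sq, hbS, ha, hc]
    simp only [Matrix.add_apply, Matrix.smul_apply, smul_eq_mul, hpt,
      Finset.sum_add_distrib, Finset.mul_sum]
  have hre : (frobInner R S).re = -γ := by rw [hγ']; ring
  rw [hexp2, frobNorm_sq R, ← ha, hcS, hre]
  rw [hcS] at hμ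
  rw [hμ]
  field_simp
  ring
end

section
/- Let Q be a real-entried matrix of size m × n (viewed in ℂ), and let M : Matrix (Fin m) (Fin n) ℂ, U : Matrix (Fin m) (Fin r) ℂ, Y : Matrix (Fin r) (Fin n) ℂ. Define the gradient g = −Uᴴ ⬝ ((Q ∘ Q) ∘ (M − U ⬝ Y)), where ∘ is entrywise (Hadamard) multiplication. Let d : Matrix (Fin r) (Fin n) ℂ be any descent direction with ‖Q ∘ (U ⬝ d)‖_F ≠ 0, set γ = Re⟨g, d⟩_F and μ = γ / ‖Q ∘ (U ⬝ d)‖_F². Then the exact line-search decrease identity holds: (1/2)‖Q ∘ (M − U ⬝ (Y − μ • d))‖_F² = (1/2)‖Q ∘ (M − U ⬝ Y)‖_F² − γ² / (2‖Q ∘ (U ⬝ d)‖_F²). -/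
open Finset Matrix

lemma normSq_add_smul (a b : ℂ) (t : ℝ) :
    Complex.normSq (a + (t : ℂ) * b) =
      Complex.normSq a + 2 * t * ((starRingEnd ℂ a) * b).re + t ^ 2 * Complex.normSq b := by
  simp [Complex.normSq_apply, Complex.mul_re, Complex.mul_im, Complex.add_re, Complex.add_im]
  ring

/-- Exact line-search decrease identity for the gradient step in `Y`. -/
theorem exact_linesearch_Y {m n r : ℕ}
    (Q : Matrix (Fin m) (Fin n) ℂ) (hQ : ∀ i j, (Q i j).im = 0)
    (M : Matrix (Fin m) (Fin n) ℂ) (U : Matrix (Fin m) (Fin r) ℂ)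
    (Y : Matrix (Fin r) (Fin n) ℂ)
    (g : Matrix (Fin r) (Fin n) ℂ)
    (hg : g = -(Uᴴ * ((Q ⊙ Q) ⊙ (M - U * Y))))
    (d : Matrix (Fin r) (Fin n) ℂ)
    (hd : frobNorm (Q ⊙ (U * d)) ≠ 0)
    (γ : ℝ) (hγ : γ = (frobInner g d).re)
    (μ : ℝ) (hμ : μ = γ / frobNorm (Q ⊙ (U * d)) ^ 2) :
    (1 / 2) * frobNorm (Q ⊙ (M - U * (Y - (μ : ℂ) • d))) ^ 2 =
      (1 / 2) * frobNorm (Q ⊙ (M - U * Y)) ^ 2 -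
        γ ^ 2 / (2 * frobNorm (Q ⊙ (U * d)) ^ 2) := by
  have hQc : ∀ i j, starRingEnd ℂ (Q i j) = Q i j := fun i j =>
    Complex.conj_eq_iff_im.mpr (hQ i j)
  set R := Q ⊙ (M - U * Y) with hR
  set S := Q ⊙ (U * d) with hS
  -- matrix identity
  have hmat : ∀ i j, (Q ⊙ (M - U * (Y - (μ : ℂ) • d))) i j = R i j + (μ : ℂ) * S i j := by
    intro i j
    simp only [hR, hS, hadamard_apply, Matrix.sub_apply, Matrix.mul_apply,
      Matrix.smul_apply, smul_eq_mul, Matrix.sub_apply, Finset.mul_sum]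
    have h1 : ∑ x, U i x * (Y x j - (μ:ℂ) * d x j)
        = (∑ x, U i x * Y x j) - ∑ x, (μ:ℂ) * (U i x * d x j) := by
      rw [← Finset.sum_sub_distrib]; exact Finset.sum_congr rfl fun k _ => by ring
    have h2 : ∑ x, (μ:ℂ) * (Q i j * (U i x * d x j))
        = Q i j * ∑ x, (μ:ℂ) * (U i x * d x j) := by
      rw [Finset.mul_sum]; exact Finset.sum_congr rfl fun k _ => by ring
    rw [h1, h2]; ring
  -- inner product identity
  have hkey : frobInner g d = - frobInner R S := by
    subst hg
    simp only [frobInner, hR, hS, Matrix.neg_apply, Matrix.mul_apply,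
      Matrix.conjTranspose_apply, hadamard_apply, map_neg, map_sum, _root_.map_mul,
      starRingEnd_self_apply, hQc, neg_mul, Finset.sum_neg_distrib, Matrix.sub_apply,
      starRingEnd_apply, star_star]
    rw [neg_inj]
    simp only [Finset.sum_mul, Finset.mul_sum]
    conv_lhs => rw [Finset.sum_comm]
    conv_lhs => enter [2, j]; rw [Finset.sum_comm]
    conv_lhs => rw [Finset.sum_comm]
    refine Finset.sum_congr rfl fun i _ => Finset.sum_congr rfl fun j _ =>
      Finset.sum_congr rfl fun k _ => by ring
  have hN : frobNorm S ^ 2 ≠ 0 := pow_ne_zero 2 hd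
  have hγ' : (frobInner R S).re = -γ := by
    rw [hγ, hkey, Complex.neg_re, neg_neg]
  have hsum : frobNorm (Q ⊙ (M - U * (Y - (μ : ℂ) • d))) ^ 2
      = frobNorm R ^ 2 + 2 * μ * (frobInner R S).re + μ ^ 2 * frobNorm S ^ 2 := by
    rw [frobNorm_sq, frobNorm_sq, frobNorm_sq, frobInner]
    rw [Complex.re_sum]
    simp only [Complex.re_sum]
    simp only [Finset.mul_sum, ← Finset.sum_add_distrib]
    refine Finset.sum_congr rfl fun i _ => Finset.sum_congr rfl fun j _ => ?_
    rw [hmat i j, normSq_add_smul]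
  rw [hsum, hγ', hμ]
  field_simp
  ring
end

section
/- Let Q be a real-entried matrix of size m × n (viewed in ℂ), and let M : Matrix (Fin m) (Fin n) ℂ, U : Matrix (Fin m) (Fin r) ℂ, Y : Matrix (Fin r) (Fin n) ℂ. Define g = −Uᴴ ⬝ ((Q ∘ Q) ∘ (M − U ⬝ Y)). Let d₁, d₂ : Matrix (Fin r) (Fin n) ℂ with D₁ := ‖Q ∘ (U ⬝ d₁)‖_F² ≠ 0 and D₂ := ‖Q ∘ (U ⬝ d₂)‖_F² ≠ 0, set γᵢ = Re⟨g, dᵢ⟩_F and μᵢ = γᵢ / Dᵢ for i = 1, 2, and let λ ∈ [0, 1]. Then the combined update Y⁺ = Y − (1 − λ)·μ₁ • d₁ − λ·μ₂ • d₂ satisfies (1/2)‖Q ∘ (M − U ⬝ Y⁺)‖_F² ≤ (1/2)‖Q ∘ (M − U ⬝ Y)‖_F² − (1 − λ)·γ₁²/(2D₁) − λ·γ₂²/(2D₂); in particular the weighted cost does not increase under the convexly combined scaled-gradient step. -/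
open Finset Matrix

lemma frobNorm_sq_eq {m n : Type*} [Fintype m] [Fintype n]
    (A : Matrix m n ℂ) : frobNorm A ^ 2 = fsq A := by
  have h : (∑ i, ∑ j, ‖A i j‖ ^ 2) = fsq A := by
    simp [fsq, Complex.sq_norm]
  rw [frobNorm, Real.sq_sqrt, h]
  positivity

lemma fsq_expand {m n : Type*} [Fintype m] [Fintype n]
    (R S : Matrix m n ℂ) (c : ℝ) :
    fsq (R + (c : ℂ) • S) = fsq R + 2 * c * (frobInner R S).re + c ^ 2 * fsq S := by
  have key : ∀ (a b : ℂ), Complex.normSq (a + (c : ℂ) * b)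
      = Complex.normSq a + 2 * c * ((starRingEnd ℂ a) * b).re + c ^ 2 * Complex.normSq b := by
    intro a b
    simp [Complex.normSq_apply, Complex.add_re, Complex.add_im, Complex.mul_re,
      Complex.mul_im, Complex.conj_re, Complex.conj_im]
    ring
  simp only [fsq, Matrix.add_apply, Matrix.smul_apply, smul_eq_mul, key,
    Finset.sum_add_distrib, frobInner, Complex.re_sum, Finset.mul_sum]

lemma fsq_convex {m n : Type*} [Fintype m] [Fintype n]
    (A B : Matrix m n ℂ) (l : ℝ) (h0 : 0 ≤ l) (h1 : l ≤ 1) :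
    fsq (((1 - l : ℝ) : ℂ) • A + ((l : ℝ) : ℂ) • B) ≤ (1 - l) * fsq A + l * fsq B := by
  simp only [fsq, Finset.mul_sum, ← Finset.sum_add_distrib]
  refine Finset.sum_le_sum fun i _ => Finset.sum_le_sum fun j _ => ?_
  set a := A i j; set b := B i j
  simp only [Matrix.add_apply, Matrix.smul_apply, smul_eq_mul, Complex.normSq_apply,
    Complex.add_re, Complex.add_im, Complex.mul_re, Complex.mul_im,
    Complex.ofReal_re, Complex.ofReal_im]
  nlinarith [sq_nonneg (a.re - b.re), sq_nonneg (a.im - b.im), mul_nonneg h0 (sub_nonneg.2 h1),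
    sq_nonneg ((1-l)*(a.re - b.re)), sq_nonneg (a.re), mul_nonneg (mul_nonneg h0 (sub_nonneg.2 h1)) (sq_nonneg (a.re - b.re)),
    mul_nonneg (mul_nonneg h0 (sub_nonneg.2 h1)) (sq_nonneg (a.im - b.im))]

lemma frobInner_key' {m n r : ℕ}
    (Q E : Matrix (Fin m) (Fin n) ℂ) (hQ : ∀ i j, (Q i j).im = 0)
    (U : Matrix (Fin m) (Fin r) ℂ)
    (d : Matrix (Fin r) (Fin n) ℂ) :
    frobInner (Uᴴ * ((Q ⊙ Q) ⊙ E)) d = frobInner (Q ⊙ E) (Q ⊙ (U * d)) := by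
  have hQc : ∀ i j, starRingEnd ℂ (Q i j) = Q i j := fun i j =>
    Complex.conj_eq_iff_im.2 (hQ i j)
  simp only [frobInner, Matrix.mul_apply, Matrix.hadamard_apply,
    Matrix.conjTranspose_apply, map_sum, _root_.map_mul,
    Complex.star_def, Complex.conj_conj, hQc, Finset.sum_mul, Finset.mul_sum]
  rw [Finset.sum_comm]
  conv_rhs => rw [Finset.sum_comm]
  refine Finset.sum_congr rfl fun j _ => ?_
  rw [Finset.sum_comm]
  refine Finset.sum_congr rfl fun i _ => Finset.sum_congr rfl fun k _ => ?_
  ring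

lemma frobInner_key {m n r : ℕ}
    (Q M : Matrix (Fin m) (Fin n) ℂ) (hQ : ∀ i j, (Q i j).im = 0)
    (U : Matrix (Fin m) (Fin r) ℂ) (Y : Matrix (Fin r) (Fin n) ℂ)
    (d : Matrix (Fin r) (Fin n) ℂ) :
    frobInner (-(Uᴴ * ((Q ⊙ Q) ⊙ (M - U * Y)))) d
      = - frobInner (Q ⊙ (M - U * Y)) (Q ⊙ (U * d)) := by
  rw [← frobInner_key' Q (M - U * Y) hQ U d]
  simp [frobInner, Matrix.neg_apply, Finset.sum_neg_distrib]

/-- The weighted cost does not increase under the convexly combined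
scaled-gradient step in `Y`. -/
theorem combined_step_decrease {m n r : ℕ}
    (Q : Matrix (Fin m) (Fin n) ℂ) (hQ : ∀ i j, (Q i j).im = 0)
    (M : Matrix (Fin m) (Fin n) ℂ) (U : Matrix (Fin m) (Fin r) ℂ)
    (Y : Matrix (Fin r) (Fin n) ℂ)
    (g : Matrix (Fin r) (Fin n) ℂ)
    (hg : g = -(Uᴴ * ((Q ⊙ Q) ⊙ (M - U * Y))))
    (d₁ d₂ : Matrix (Fin r) (Fin n) ℂ)
    (D₁ D₂ : ℝ)
    (hD₁ : D₁ = frobNorm (Q ⊙ (U * d₁)) ^ 2) (hD₁0 : D₁ ≠ 0)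
    (hD₂ : D₂ = frobNorm (Q ⊙ (U * d₂)) ^ 2) (hD₂0 : D₂ ≠ 0)
    (γ₁ γ₂ : ℝ) (hγ₁ : γ₁ = (frobInner g d₁).re) (hγ₂ : γ₂ = (frobInner g d₂).re)
    (μ₁ μ₂ : ℝ) (hμ₁ : μ₁ = γ₁ / D₁) (hμ₂ : μ₂ = γ₂ / D₂)
    (lam : ℝ) (hlam : lam ∈ Set.Icc (0 : ℝ) 1)
    (Yplus : Matrix (Fin r) (Fin n) ℂ)
    (hYplus : Yplus = Y - (((1 - lam) * μ₁ : ℝ) : ℂ) • d₁ - ((lam * μ₂ : ℝ) : ℂ) • d₂) :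
    (1 / 2) * frobNorm (Q ⊙ (M - U * Yplus)) ^ 2 ≤
      (1 / 2) * frobNorm (Q ⊙ (M - U * Y)) ^ 2 -
        (1 - lam) * γ₁ ^ 2 / (2 * D₁) - lam * γ₂ ^ 2 / (2 * D₂) := by
  obtain ⟨hl0, hl1⟩ := hlam
  set R := Q ⊙ (M - U * Y) with hR
  set S₁ := Q ⊙ (U * d₁) with hS₁
  set S₂ := Q ⊙ (U * d₂) with hS₂
  have hsplit : Q ⊙ (M - U * Yplus)
      = ((1 - lam : ℝ) : ℂ) • (R + (μ₁ : ℂ) • S₁) + ((lam : ℝ) : ℂ) • (R + (μ₂ : ℂ) • S₂) := by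
    subst hYplus
    ext i j
    simp only [hR, hS₁, hS₂, Matrix.hadamard_apply, Matrix.sub_apply, Matrix.add_apply,
      Matrix.smul_apply, Matrix.mul_sub, Matrix.mul_smul, smul_eq_mul]
    push_cast
    ring
  have hg1 : (frobInner R S₁).re = -γ₁ := by
    rw [hγ₁, hg, frobInner_key Q M hQ U Y d₁]
    simp
    rfl
  have hg2 : (frobInner R S₂).re = -γ₂ := by
    rw [hγ₂, hg, frobInner_key Q M hQ U Y d₂]
    simp
    rfl
  have hDS₁ : fsq S₁ = D₁ := by rw [hD₁, frobNorm_sq_eq]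
  have hDS₂ : fsq S₂ = D₂ := by rw [hD₂, frobNorm_sq_eq]
  have hA : fsq (R + (μ₁ : ℂ) • S₁) = fsq R - γ₁ ^ 2 / D₁ := by
    rw [fsq_expand, hg1, hDS₁, hμ₁]
    field_simp
    ring
  have hB : fsq (R + (μ₂ : ℂ) • S₂) = fsq R - γ₂ ^ 2 / D₂ := by
    rw [fsq_expand, hg2, hDS₂, hμ₂]
    field_simp
    ring
  have hconv := fsq_convex (R + (μ₁ : ℂ) • S₁) (R + (μ₂ : ℂ) • S₂) lam hl0 hl1
  rw [frobNorm_sq_eq, frobNorm_sq_eq, hsplit]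
  rw [hA, hB] at hconv
  have : fsq (((1 - lam : ℝ) : ℂ) • (R + (μ₁ : ℂ) • S₁) + ((lam : ℝ) : ℂ) • (R + (μ₂ : ℂ) • S₂))
      ≤ fsq R - (1 - lam) * (γ₁ ^ 2 / D₁) - lam * (γ₂ ^ 2 / D₂) := by linarith [hconv]
  have h1 : (1 - lam) * γ₁ ^ 2 / (2 * D₁) = (1 - lam) * (γ₁ ^ 2 / D₁) / 2 := by ring
  have h2 : lam * γ₂ ^ 2 / (2 * D₂) = lam * (γ₂ ^ 2 / D₂) / 2 := by ring
  linarith [this]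
end
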